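/- Let A be a Schur ring over the infinite dihedral group D∞ such that Z = ⟨z⟩ is an A-subgroup, every basic set of A contained in Z is of the form {z^j, z^{−j}}, and the basic set of A containing s is {s, z^i s} for some i ≠ 0. Then there exists a nonzero integer i₀ such that {z^{i₀} s} is a basic set of A if and only if i is even; moreover, in that case i₀ = i/2, the set {z^{i/2} s} is the unique singleton basic set other than {1}, and the basic sets of A are exactly the sets {z^{j+i/2} s, z^{i/2−j} s} for j ∈ ℤ together with the sets {z^j, z^{−j}} for j ∈ ℤ. -/

import Mathlib

open scoped BigOperators

/-- A Schur ring over the group `G` with coefficients in the field `F`, presented by its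
partition into finite nonempty basic sets. -/
structure SchurRing (F : Type) [Field F] [CharZero F] (G : Type) [Group G] [DecidableEq G] where
  /-- the basic sets -/
  parts : Set (Finset G)
  nonempty : ∀ C ∈ parts, C.Nonempty
  cover : ∀ g : G, ∃ C ∈ parts, g ∈ C
  eq_or_disjoint : ∀ C ∈ parts, ∀ D ∈ parts, C = D ∨ Disjoint C D
  one_mem : ({1} : Finset G) ∈ parts
  inv_mem : ∀ C ∈ parts, C.image (·⁻¹) ∈ parts
  mul_mem : ∀ C ∈ parts, ∀ D ∈ parts, ∃ S : Finset (Finset G),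
    (↑S : Set (Finset G)) ⊆ parts ∧ ∃ coef : Finset G → F,
      (∑ g ∈ C, MonoidAlgebra.single g (1 : F)) * (∑ g ∈ D, MonoidAlgebra.single g (1 : F))
        = ∑ E ∈ S, coef E • ∑ g ∈ E, MonoidAlgebra.single g (1 : F)

/-- A subset of `G` is an `A`-set if it is a union of basic sets of `A`. -/
def SchurRing.IsASet {F : Type} [Field F] [CharZero F] {G : Type} [Group G] [DecidableEq G]
    (A : SchurRing F G) (X : Set G) : Prop :=
  ∃ 𝒮 : Set (Finset G), 𝒮 ⊆ A.parts ∧ X = ⋃ C ∈ 𝒮, (C : Set G)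

/-- The infinite dihedral group, realized as `DihedralGroup 0`. -/
abbrev Dinf : Type := DihedralGroup 0

/-- The generator `z` of infinite order. -/
def zz : Dinf := DihedralGroup.r 1

/-- The reflection `s` of order two. -/
def ss : Dinf := DihedralGroup.sr 0

section Aux

lemma zz_pow_nat (n : ℕ) : zz ^ n = DihedralGroup.r (n : ℤ) := by
  have := DihedralGroup.r_one_pow (n := 0) n
  rw [zz]; convert this using 2
  rfl

lemma zz_zpow (k : ℤ) : zz ^ k = DihedralGroup.r k := by
  cases k with
  | ofNat n => simpa using zz_pow_nat n
  | negSucc n => rw [zpow_negSucc, zz_pow_nat]; rfl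

lemma zs (a : ℤ) : zz ^ a * ss = DihedralGroup.sr (-a) := by
  rw [zz_zpow, ss]
  exact (DihedralGroup.r_mul_sr (n := 0) a 0).trans (congrArg DihedralGroup.sr (zero_sub a))

lemma sr_eq_zs (k : ℤ) : DihedralGroup.sr k = zz ^ (-k) * ss := by rw [zs, neg_neg]

lemma zs_inj {a b : ℤ} (h : zz ^ a * ss = zz ^ b * ss) : a = b := by
  rw [zs, zs] at h
  have : (-a : ℤ) = -b := DihedralGroup.sr.inj h
  omega

lemma zz_inj {a b : ℤ} (h : zz ^ a = zz ^ b) : a = b := by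
  rw [zz_zpow, zz_zpow] at h
  exact DihedralGroup.r.inj h

lemma ss_eq_zs : ss = zz ^ (0:ℤ) * ss := by rw [zpow_zero, one_mul]

lemma r_mem_zpowers (k : ℤ) : (DihedralGroup.r k : Dinf) ∈ Subgroup.zpowers zz := by
  refine ⟨k, ?_⟩; show zz ^ k = _; exact zz_zpow k

lemma sr_not_mem_zpowers (k : ℤ) : (DihedralGroup.sr k : Dinf) ∉ Subgroup.zpowers zz := by
  rintro ⟨m, hm⟩
  have hm' : zz ^ m = DihedralGroup.sr k := hm
  rw [zz_zpow] at hm'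
  exact absurd hm' (by simp)

lemma dinf_cases (x : Dinf) : (∃ m : ℤ, x = zz ^ m) ∨ (∃ m : ℤ, x = zz ^ m * ss) := by
  cases x with
  | r k => exact Or.inl ⟨k, (zz_zpow k).symm⟩
  | sr k => exact Or.inr ⟨-(k : ℤ), sr_eq_zs k⟩

lemma zs_eq_iff (p q : ℤ) : (zz ^ p * ss = zz ^ q * ss) ↔ (q = p) :=
  ⟨fun h => (zs_inj h).symm, fun h => by rw [h]⟩

lemma mem_pair_zs {x a b : ℤ} :
    zz ^ x * ss ∈ ({zz ^ a * ss, zz ^ b * ss} : Finset Dinf) ↔ x = a ∨ x = b := by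
  constructor
  · intro h
    rcases Finset.mem_insert.mp h with h | h
    · exact Or.inl (zs_inj h)
    · exact Or.inr (zs_inj (Finset.mem_singleton.mp h))
  · rintro (rfl | rfl)
    · exact Finset.mem_insert_self _ _
    · exact Finset.mem_insert_of_mem (Finset.mem_singleton_self _)

/-- counting function for pair × pair products -/
def cnt (c d x j : ℤ) : ℕ :=
  (if x = c + j then 1 else 0) + (if x = c - j then 1 else 0) +
  (if x = d + j then 1 else 0) + (if x = d - j then 1 else 0)

def cnt1 (c x j : ℤ) : ℕ :=
  (if x = c + j then 1 else 0) + (if x = c - j then 1 else 0)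

set_option maxHeartbeats 1600000 in
lemma main_cnt (i a b : ℤ) (hi : i ≠ 0) (ha0 : a ≠ 0) (hai : a ≠ i) (hb0 : b ≠ 0)
    (hbi : b ≠ i) (hab : a ≠ b)
    (H : ∀ j : ℤ, j ≠ 0 → cnt 0 i a j = cnt 0 i b j) : b = i - a := by
  rcases eq_or_ne b (i - a) with h | hbia
  · exact h
  have h1 := H a ha0
  have h2 := H (a - i) (by omega)
  have h3 := H b hb0
  simp only [cnt] at h1 h2 h3
  rcases eq_or_ne b (-a) with hbna | hbna
  · split_ifs at h2 <;> omega
  · have hba : b = i + a := by split_ifs at h1 <;> omega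
    split_ifs at h3 <;> omega

end Aux

section SR
variable {F : Type} [Field F] [CharZero F]

lemma qty_apply (C : Finset Dinf) (x : Dinf) :
    (∑ g ∈ C, MonoidAlgebra.single g (1 : F)).coeff x = if x ∈ C then (1 : F) else 0 := by
  rw [MonoidAlgebra.coeff_sum, Finsupp.finset_sum_apply]
  simp [Finsupp.single_apply, MonoidAlgebra.coeff_single_apply]

lemma part_eq (A : SchurRing F Dinf) {C D : Finset Dinf} {g : Dinf}
    (hC : C ∈ A.parts) (hD : D ∈ A.parts) (hgC : g ∈ C) (hgD : g ∈ D) : C = D :=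
  (A.eq_or_disjoint C hC D hD).resolve_right fun h =>
    (Finset.disjoint_left.mp h hgC hgD).elim

lemma part_sub_Z (A : SchurRing F Dinf)
    (hZ : A.IsASet (Subgroup.zpowers zz : Subgroup Dinf)) {C : Finset Dinf}
    (hC : C ∈ A.parts) {g : Dinf} (hg : g ∈ C) (hgZ : g ∈ Subgroup.zpowers zz) :
    ∀ x ∈ C, x ∈ Subgroup.zpowers zz := by
  obtain ⟨𝒮, h𝒮, hcov⟩ := hZ
  have hg' : g ∈ ((Subgroup.zpowers zz : Subgroup Dinf) : Set Dinf) := hgZ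
  rw [hcov] at hg'
  obtain ⟨C', hC'𝒮, hgC'⟩ := Set.mem_iUnion₂.mp hg'
  have hCC' : C = C' := part_eq A hC (h𝒮 hC'𝒮) hg hgC'
  intro x hx
  have : x ∈ ((Subgroup.zpowers zz : Subgroup Dinf) : Set Dinf) := by
    rw [hcov]
    exact Set.mem_biUnion hC'𝒮 (by exact_mod_cast hCC' ▸ hx)
  exact this

lemma coeff_const (A : SchurRing F Dinf) {C X E : Finset Dinf}
    (hC : C ∈ A.parts) (hX : X ∈ A.parts) (hE : E ∈ A.parts) {a b : Dinf}
    (ha : a ∈ E) (hb : b ∈ E) :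
    ((∑ g ∈ C, MonoidAlgebra.single g (1 : F)) * (∑ g ∈ X, MonoidAlgebra.single g (1 : F))).coeff a
      = ((∑ g ∈ C, MonoidAlgebra.single g (1 : F)) *
          (∑ g ∈ X, MonoidAlgebra.single g (1 : F))).coeff b := by
  obtain ⟨S, hS, coef, heq⟩ := A.mul_mem C hC X hX
  rw [heq, MonoidAlgebra.coeff_sum, Finsupp.finset_sum_apply, Finsupp.finset_sum_apply]
  refine Finset.sum_congr rfl fun E' hE' => ?_
  simp only [MonoidAlgebra.coeff_smul]
  rw [Finsupp.smul_apply, Finsupp.smul_apply, qty_apply, qty_apply]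
  have hmem : a ∈ E' ↔ b ∈ E' := by
    constructor
    · intro h; exact (part_eq A (hS hE') hE h ha) ▸ hb
    · intro h; exact (part_eq A (hS hE') hE h hb) ▸ ha
  simp [hmem]

lemma prod_pair_apply (j x c d : ℤ) (hj : j ≠ 0) (hcd : c ≠ d) :
    ((∑ g ∈ ({zz ^ j, zz ^ (-j)} : Finset Dinf), MonoidAlgebra.single g (1 : F)) *
      (∑ g ∈ ({zz ^ c * ss, zz ^ d * ss} : Finset Dinf), MonoidAlgebra.single g (1 : F))).coeff
      (zz ^ x * ss) = ((cnt c d x j : ℕ) : F) := by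
  have h1 : (zz ^ j : Dinf) ≠ zz ^ (-j) := fun h => hj (by have := zz_inj h; omega)
  have h2 : (zz ^ c * ss : Dinf) ≠ zz ^ d * ss := fun h => hcd (zs_inj h)
  have mule : ∀ p q : ℤ, (zz ^ p : Dinf) * (zz ^ q * ss) = zz ^ (q + p) * ss := by
    intro p q; rw [← mul_assoc, ← zpow_add, add_comm]
  rw [Finset.sum_pair h1, Finset.sum_pair h2, add_mul, mul_add, mul_add,
    MonoidAlgebra.single_mul_single, MonoidAlgebra.single_mul_single,
    MonoidAlgebra.single_mul_single, MonoidAlgebra.single_mul_single,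
    one_mul, mule, mule, mule, mule, MonoidAlgebra.coeff_add, MonoidAlgebra.coeff_add,
      MonoidAlgebra.coeff_add, Finsupp.add_apply, Finsupp.add_apply, Finsupp.add_apply,
    MonoidAlgebra.single_apply, MonoidAlgebra.single_apply, MonoidAlgebra.single_apply,
    MonoidAlgebra.single_apply]
  simp only [zs_eq_iff]
  simp only [cnt, Nat.cast_add, Nat.cast_ite, Nat.cast_one, Nat.cast_zero]
  ring

lemma prod_single_apply (j x c : ℤ) (hj : j ≠ 0) :
    ((∑ g ∈ ({zz ^ j, zz ^ (-j)} : Finset Dinf), MonoidAlgebra.single g (1 : F)) *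
      (∑ g ∈ ({zz ^ c * ss} : Finset Dinf), MonoidAlgebra.single g (1 : F))).coeff
      (zz ^ x * ss) = ((cnt1 c x j : ℕ) : F) := by
  have h1 : (zz ^ j : Dinf) ≠ zz ^ (-j) := fun h => hj (by have := zz_inj h; omega)
  have mule : ∀ p q : ℤ, (zz ^ p : Dinf) * (zz ^ q * ss) = zz ^ (q + p) * ss := by
    intro p q; rw [← mul_assoc, ← zpow_add, add_comm]
  rw [Finset.sum_pair h1, Finset.sum_singleton, add_mul,
    MonoidAlgebra.single_mul_single, MonoidAlgebra.single_mul_single,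
    one_mul, mule, mule, MonoidAlgebra.coeff_add, Finsupp.add_apply,
    MonoidAlgebra.single_apply, MonoidAlgebra.single_apply]
  simp only [zs_eq_iff]
  simp only [cnt1, Nat.cast_add, Nat.cast_ite, Nat.cast_one, Nat.cast_zero]
  ring

end SR

section SR2
variable {F : Type} [Field F] [CharZero F]

lemma mem_D_iff {i x : ℤ} :
    zz ^ x * ss ∈ ({ss, zz ^ i * ss} : Finset Dinf) ↔ x = 0 ∨ x = i := by
  have h : ({ss, zz ^ i * ss} : Finset Dinf) = {zz ^ (0:ℤ) * ss, zz ^ i * ss} := by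
    rw [← ss_eq_zs]
  rw [h, mem_pair_zs]

lemma zpair_part (A : SchurRing F Dinf)
    (hZ : A.IsASet (Subgroup.zpowers zz : Subgroup Dinf))
    (hsym : ∀ C ∈ A.parts, (C : Set Dinf) ⊆ (Subgroup.zpowers zz : Subgroup Dinf) →
      ∃ j : ℤ, C = {zz ^ j, zz ^ (-j)}) (j : ℤ) :
    ({zz ^ j, zz ^ (-j)} : Finset Dinf) ∈ A.parts := by
  obtain ⟨C, hC, hmem⟩ := A.cover (zz ^ j)
  have hzj : (zz ^ j : Dinf) ∈ Subgroup.zpowers zz := Subgroup.zpow_mem _ (Subgroup.mem_zpowers zz) j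
  have hsub := part_sub_Z A hZ hC hmem hzj
  obtain ⟨j', hj'⟩ := hsym C hC (fun x hx => hsub x hx)
  subst hj'
  rcases Finset.mem_insert.mp hmem with h | h
  · have hj : j = j' := zz_inj h
    subst hj; exact hC
  · have hj : j = -j' := zz_inj (Finset.mem_singleton.mp h)
    have hj2 : j' = -j := by omega
    have e : ({zz ^ j', zz ^ (-j')} : Finset Dinf) = {zz ^ j, zz ^ (-j)} := by
      rw [hj2, neg_neg, Finset.pair_comm]
    rwa [e] at hC

lemma pair_lemma (A : SchurRing F Dinf)
    (hZ : A.IsASet (Subgroup.zpowers zz : Subgroup Dinf))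
    (hsym : ∀ C ∈ A.parts, (C : Set Dinf) ⊆ (Subgroup.zpowers zz : Subgroup Dinf) →
      ∃ j : ℤ, C = {zz ^ j, zz ^ (-j)})
    {i : ℤ} (hi : i ≠ 0) (hD : ({ss, zz ^ i * ss} : Finset Dinf) ∈ A.parts)
    {S : Finset Dinf} (hS : S ∈ A.parts) {a b : ℤ}
    (ha : zz ^ a * ss ∈ S) (hb : zz ^ b * ss ∈ S) (hab : a ≠ b) : b = i - a := by
  have hSD : ∀ x : ℤ, (x = 0 ∨ x = i) → zz ^ x * ss ∈ S → S = {ss, zz ^ i * ss} := by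
    intro x hx hxS
    exact part_eq A hS hD hxS (mem_D_iff.mpr hx)
  by_cases ha0 : a = 0 ∨ a = i
  · have hSDe := hSD a ha0 ha
    rw [hSDe] at hb
    rcases mem_D_iff.mp hb with h | h <;> rcases ha0 with h0 | h0 <;> omega
  by_cases hb0 : b = 0 ∨ b = i
  · have hSDe := hSD b hb0 hb
    rw [hSDe] at ha
    rcases mem_D_iff.mp ha with h | h <;> rcases hb0 with h0 | h0 <;> omega
  push_neg at ha0 hb0
  apply main_cnt i a b hi ha0.1 ha0.2 hb0.1 hb0.2 hab
  intro j hj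
  have hpair := zpair_part A hZ hsym j
  have hcc := coeff_const (F := F) A hpair hD hS ha hb
  have hDe : ({ss, zz ^ i * ss} : Finset Dinf) = {zz ^ (0:ℤ) * ss, zz ^ i * ss} := by
    rw [← ss_eq_zs]
  rw [hDe, prod_pair_apply j a 0 i hj (Ne.symm hi),
    prod_pair_apply j b 0 i hj (Ne.symm hi)] at hcc
  exact_mod_cast hcc

lemma sing_lemma (A : SchurRing F Dinf)
    (hZ : A.IsASet (Subgroup.zpowers zz : Subgroup Dinf))
    (hsym : ∀ C ∈ A.parts, (C : Set Dinf) ⊆ (Subgroup.zpowers zz : Subgroup Dinf) →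
      ∃ j : ℤ, C = {zz ^ j, zz ^ (-j)})
    {i : ℤ} (hi : i ≠ 0) (hD : ({ss, zz ^ i * ss} : Finset Dinf) ∈ A.parts)
    {a : ℤ} (h : ({zz ^ a * ss} : Finset Dinf) ∈ A.parts) : 2 * a = i := by
  by_cases ha : a = 0
  · exfalso
    subst ha
    rw [← ss_eq_zs] at h
    have he := part_eq A h hD (Finset.mem_singleton_self ss) (Finset.mem_insert_self _ _)
    have h1 : zz ^ i * ss ∈ ({ss} : Finset Dinf) := by
      rw [he]; exact Finset.mem_insert_of_mem (Finset.mem_singleton_self _)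
    have h2 := Finset.mem_singleton.mp h1
    rw [ss_eq_zs] at h2
    exact hi (zs_inj h2)
  · have hpair := zpair_part A hZ hsym a
    have hss : ss ∈ ({ss, zz ^ i * ss} : Finset Dinf) := Finset.mem_insert_self _ _
    have hzi : zz ^ i * ss ∈ ({ss, zz ^ i * ss} : Finset Dinf) :=
      Finset.mem_insert_of_mem (Finset.mem_singleton_self _)
    have hcc := coeff_const (F := F) A hpair h hD hss hzi
    have v1 := prod_single_apply (F := F) a 0 a ha
    have v2 := prod_single_apply (F := F) a i a ha
    rw [← ss_eq_zs] at v1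
    rw [v1, v2] at hcc
    have hn : cnt1 a 0 a = cnt1 a i a := by exact_mod_cast hcc
    simp only [cnt1] at hn
    split_ifs at hn <;> omega

lemma part_form (A : SchurRing F Dinf)
    (hZ : A.IsASet (Subgroup.zpowers zz : Subgroup Dinf))
    (hsym : ∀ C ∈ A.parts, (C : Set Dinf) ⊆ (Subgroup.zpowers zz : Subgroup Dinf) →
      ∃ j : ℤ, C = {zz ^ j, zz ^ (-j)})
    {i : ℤ} (hi : i ≠ 0) (hD : ({ss, zz ^ i * ss} : Finset Dinf) ∈ A.parts)
    {S : Finset Dinf} {a : ℤ} (hS : S ∈ A.parts) (ha : zz ^ a * ss ∈ S) :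
    S = {zz ^ a * ss, zz ^ (i - a) * ss} := by
  have hall : ∀ y ∈ S, y = zz ^ a * ss ∨ y = zz ^ (i - a) * ss := by
    intro y hy
    cases y with
    | r k =>
        exfalso
        have h1 := part_sub_Z A hZ hS hy (r_mem_zpowers k) (zz ^ a * ss) ha
        rw [zs] at h1
        exact sr_not_mem_zpowers _ h1
    | sr k =>
        rw [sr_eq_zs k] at hy ⊢
        rcases eq_or_ne (-k : ℤ) a with h | h
        · left; exact congrArg (fun t : ℤ => zz ^ t * ss) h
        · right
          rw [pair_lemma A hZ hsym hi hD hS ha hy (fun hh => h hh.symm)]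
  by_cases hia : zz ^ (i - a) * ss ∈ S
  · apply Finset.ext
    intro y
    constructor
    · intro hy
      rcases hall y hy with h | h
      · rw [h]; exact Finset.mem_insert_self _ _
      · rw [h]; exact Finset.mem_insert_of_mem (Finset.mem_singleton_self _)
    · intro hy
      rcases Finset.mem_insert.mp hy with h | h
      · exact h ▸ ha
      · exact (Finset.mem_singleton.mp h) ▸ hia
  · exfalso
    have hsing : S = {zz ^ a * ss} := by
      apply Finset.eq_singleton_iff_unique_mem.mpr
      refine ⟨ha, fun y hy => ?_⟩
      rcases hall y hy with h | h
      · exact h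
      · exact absurd (h ▸ hy) hia
    have h2 := sing_lemma A hZ hsym hi hD (hsing ▸ hS)
    apply hia
    rw [show i - a = a from by omega]
    exact ha

end SR2

/-- Suppose `⟨z⟩` is an `A`-subgroup, every basic set inside `⟨z⟩` has the form `{z^j, z^(-j)}`,
and the basic set containing `s` is `{s, z^i s}` with `i ≠ 0`. Then a singleton basic set
`{z^(i₀) s}` with `i₀ ≠ 0` exists iff `i` is even; in that case `i₀ = i/2`, the set
`{z^(i/2) s}` is the unique singleton basic set besides `{1}`, and the basic sets are exactly
the `{z^(j+i/2) s, z^(i/2-j) s}` together with the `{z^j, z^(-j)}`. -/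
theorem stmt_8 (F : Type) [Field F] [CharZero F] (A : SchurRing F Dinf)
    (hZ : A.IsASet (Subgroup.zpowers zz : Subgroup Dinf))
    (hsym : ∀ C ∈ A.parts, (C : Set Dinf) ⊆ (Subgroup.zpowers zz : Subgroup Dinf) →
      ∃ j : ℤ, C = {zz ^ j, zz ^ (-j)})
    (i : ℤ) (hi : i ≠ 0) (hD : ({ss, zz ^ i * ss} : Finset Dinf) ∈ A.parts) :
    ((∃ i₀ : ℤ, i₀ ≠ 0 ∧ ({zz ^ i₀ * ss} : Finset Dinf) ∈ A.parts) ↔ Even i) ∧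
    (Even i →
      (∀ i₀ : ℤ, i₀ ≠ 0 → ({zz ^ i₀ * ss} : Finset Dinf) ∈ A.parts → i₀ = i / 2) ∧
      ({zz ^ (i / 2) * ss} : Finset Dinf) ∈ A.parts ∧
      (∀ g : Dinf, ({g} : Finset Dinf) ∈ A.parts → g = 1 ∨ g = zz ^ (i / 2) * ss) ∧
      A.parts =
        {C : Finset Dinf | ∃ j : ℤ, C = {zz ^ (j + i / 2) * ss, zz ^ (i / 2 - j) * ss}} ∪
        {C : Finset Dinf | ∃ j : ℤ, C = {zz ^ j, zz ^ (-j)}}) := by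
  have hsing : ∀ i₀ : ℤ, ({zz ^ i₀ * ss} : Finset Dinf) ∈ A.parts → 2 * i₀ = i :=
    fun i₀ h => sing_lemma A hZ hsym hi hD h
  have hhalf : Even i → ({zz ^ (i / 2) * ss} : Finset Dinf) ∈ A.parts := by
    intro hE
    obtain ⟨c, hc⟩ := hE
    obtain ⟨S, hS, hm⟩ := A.cover (zz ^ (i / 2) * ss)
    have hf := part_form A hZ hsym hi hD hS hm
    rw [show i - i / 2 = i / 2 from by omega] at hf
    rw [hf] at hS
    rwa [Finset.insert_eq_self.mpr (Finset.mem_singleton_self _)] at hS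
  refine ⟨⟨?_, ?_⟩, ?_⟩
  · rintro ⟨i₀, h0, hp⟩
    have := hsing i₀ hp
    exact ⟨i₀, by omega⟩
  · intro hE
    refine ⟨i / 2, ?_, hhalf hE⟩
    obtain ⟨c, hc⟩ := hE; omega
  · intro hE
    obtain ⟨c, hc⟩ := hE
    refine ⟨fun i₀ h0 hp => by have := hsing i₀ hp; omega, hhalf ⟨c, hc⟩, ?_, ?_⟩
    · intro g hg
      rcases dinf_cases g with ⟨m, rfl⟩ | ⟨m, rfl⟩
      · left
        have hp := zpair_part A hZ hsym m
        have he := part_eq A hg hp (Finset.mem_singleton_self _) (Finset.mem_insert_self _ _)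
        have h2 : (zz ^ (-m) : Dinf) ∈ ({zz ^ m} : Finset Dinf) := by
          rw [he]; exact Finset.mem_insert_of_mem (Finset.mem_singleton_self _)
        have hk : (-m : ℤ) = m := zz_inj (Finset.mem_singleton.mp h2)
        rw [show m = 0 from by omega, zpow_zero]
      · right
        have h2 := hsing _ hg
        rw [show m = i / 2 from by omega]
    · ext C
      simp only [Set.mem_union, Set.mem_setOf_eq]
      constructor
      · intro hC
        obtain ⟨x, hx⟩ := A.nonempty C hC
        rcases dinf_cases x with ⟨m, rfl⟩ | ⟨m, rfl⟩
        · right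
          have hsub := part_sub_Z A hZ hC hx (by rw [zz_zpow]; exact r_mem_zpowers m)
          exact hsym C hC (fun y hy => hsub y hy)
        · left
          have hf := part_form A hZ hsym hi hD hC hx
          refine ⟨m - i / 2, ?_⟩
          rw [hf, show (m - i / 2) + i / 2 = m from by omega,
            show i / 2 - (m - i / 2) = i - m from by omega]
      · rintro (⟨j, rfl⟩ | ⟨j, rfl⟩)
        · obtain ⟨S, hS, hm⟩ := A.cover (zz ^ (j + i / 2) * ss)
          have hf := part_form A hZ hsym hi hD hS hm
          rw [show i - (j + i / 2) = i / 2 - j from by omega] at hf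
          exact hf ▸ hS
        · exact zpair_part A hZ hsym j
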